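/- Severe revision decomposes into severe antiwithdrawal followed by natural revision: for every total preorder C and formula P, C sevr(P) is equivalent to C sev(P) nat(P). -/

import Mathlib

open Set
open scoped Classical

variable {M : Type*}

namespace BeliefRevision

/-- `minSet C P`: the minimal models of `P` according to the total preorder `C`,
i.e. `C(i) ∩ Mod(P)` for the least `i` making this nonempty. -/
noncomputable def minSet : List (Set M) → Set M → Set M
  | [], _ => ∅
  | X :: rest, P => if (X ∩ P).Nonempty then X ∩ P else minSet rest P

/-- Equivalence of total preorders: same minimal models for every formula. -/
def equivC (C C' : List (Set M)) : Prop :=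
  ∀ P : Set M, minSet C P = minSet C' P

/-- A total preorder: an ordered partition (empty classes allowed) of all models. -/
def IsPartition (C : List (Set M)) : Prop :=
  C.Pairwise Disjoint ∧ C.foldr (· ∪ ·) ∅ = Set.univ

/-- Lexicographic revision. -/
def lex (C : List (Set M)) (L : Set M) : List (Set M) :=
  C.map (· ∩ L) ++ C.map (· \ L)

/-- Refinement. -/
def refi (C : List (Set M)) (R : Set M) : List (Set M) :=
  C.flatMap fun X => [X ∩ R, X \ R]

/-- Natural revision: `[C(i)∩P, C(0),...,C(i-1), C(i)\P, C(i+1),...,C(m)]`. -/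
noncomputable def natr : List (Set M) → Set M → List (Set M)
  | [], _ => []
  | X :: rest, P =>
    if (X ∩ P).Nonempty then (X ∩ P) :: (X \ P) :: rest
    else
      match natr rest P with
      | a :: r => a :: X :: r
      | [] => [X]

/-- Severe antiwithdrawal: merge classes `0..i` where `i` is least with `C(i)∩P ≠ ∅`. -/
noncomputable def sevw : List (Set M) → Set M → List (Set M)
  | [], _ => []
  | X :: rest, P =>
    if (X ∩ P).Nonempty then X :: rest
    else
      match sevw rest P with
      | a :: r => (X ∪ a) :: r
      | [] => [X]

/-- Restrained revision. -/
noncomputable def res : List (Set M) → Set M → List (Set M)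
  | [], _ => []
  | X :: rest, P =>
    if (X ∩ P).Nonempty then
      (X ∩ P) :: (X \ P) :: rest.flatMap (fun Y => [Y ∩ P, Y \ P])
    else
      match res rest P with
      | a :: r => a :: (X ∩ P) :: (X \ P) :: r
      | [] => [X ∩ P, X \ P]

/-- Very radical revision. -/
def rad (C : List (Set M)) (P : Set M) : List (Set M) :=
  C.map (· ∩ P) ++ [C.foldr (· ∪ ·) ∅ \ P]

/-- Severe revision: `[C(i)∩P, (C(0)∪...∪C(i))\P, C(i+1),...,C(m)]`. -/
noncomputable def sevr : List (Set M) → Set M → List (Set M)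
  | [], _ => []
  | X :: rest, P =>
    if (X ∩ P).Nonempty then (X ∩ P) :: (X \ P) :: rest
    else
      match sevr rest P with
      | a :: b :: r => a :: (X ∪ b) :: r
      | l => X :: l

/-- Moderate severe revision. -/
noncomputable def msev (C : List (Set M)) (P : Set M) : List (Set M) :=
  C.map (· ∩ P) ++ (sevw C P).map (· \ P)

/-- Merge `A` with the first nonempty class of the list (helper for `psev`). -/
noncomputable def mergeJ (A : Set M) : List (Set M) → List (Set M)
  | [] => [A]
  | Y :: r => if Y.Nonempty then (A ∪ Y) :: r else mergeJ A r

/-- Plain severe revision: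
`[C(i)∩P, C(0)∪...∪(C(i)\P)∪C(j), C(j+1),...,C(m)]` with `i` least with
`C(i)∩P ≠ ∅` and `j` the least index `> i` with `C(j) ≠ ∅`. -/
noncomputable def psev : List (Set M) → Set M → List (Set M)
  | [], _ => []
  | X :: rest, P =>
    if (X ∩ P).Nonempty then (X ∩ P) :: mergeJ (X \ P) rest
    else
      match psev rest P with
      | a :: b :: r => a :: (X ∪ b) :: r
      | l => X :: l

/-- Full meet revision. -/
noncomputable def full (C : List (Set M)) (P : Set M) : List (Set M) :=
  [minSet C P, Set.univ \ minSet C P]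

/-- `maxset F [F₁,...,Fₖ]`: conjoin each `Fᵢ` in order whenever consistent. -/
noncomputable def maxset : Set M → List (Set M) → Set M
  | F, [] => F
  | F, L :: rest => maxset (if (F ∩ L).Nonempty then F ∩ L else F) rest

/-- The underformula `under(S; Lₙ,...,L₁)`. -/
noncomputable def under : Set M → List (Set M) → Set M
  | _, [] => Set.univ
  | S, L :: rest =>
    if (S ∩ L).Nonempty then L ∩ under (S ∩ L) rest else L ∪ under S rest

/-- `upTo C S = C(0) ∪ ... ∪ C(i)` where `i` is least with `C(i)∩S ≠ ∅`. -/
noncomputable def upTo : List (Set M) → Set M → Set M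
  | [], _ => ∅
  | X :: rest, S => if (X ∩ S).Nonempty then X else X ∪ upTo rest S

noncomputable def longestAux : Set M → List (Set M) → Set M
  | A, [] => A
  | A, L :: rest => if (A ∩ L).Nonempty then longestAux (A ∩ L) rest else A

/-- Longest consistent conjunction of a sequence of formulas. -/
noncomputable def longest : List (Set M) → Set M
  | [] => Set.univ
  | L :: rest => longestAux L rest

/-- `rev` is a bottom-refining revision on `(C,P)`: it is a revision
(`min(C rev(P),⊤) = min(C,P)`) and, whenever `C(0)∩Mod(P) ≠ ∅`, class zero of
the result is `C(0)∩Mod(P)` and class one is `C(0)\Mod(P)`. -/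
noncomputable def BottomRefining (rev : List (Set M) → Set M → List (Set M))
    (C : List (Set M)) (P : Set M) : Prop :=
  minSet (rev C P) Set.univ = minSet C P ∧
  ((C.getD 0 ∅ ∩ P).Nonempty →
    (rev C P).getD 0 ∅ = C.getD 0 ∅ ∩ P ∧
    (rev C P).getD 1 ∅ = C.getD 0 ∅ \ P)

lemma mem_foldr_union {C : List (Set M)} {x : M}
    (h : x ∈ C.foldr (· ∪ ·) ∅) : ∃ X ∈ C, x ∈ X := by
  induction C with
  | nil => simp at h
  | cons X rest ih =>
    rcases h with h | h
    · exact ⟨X, List.mem_cons_self, h⟩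
    · obtain ⟨Y, hY, hx⟩ := ih h
      exact ⟨Y, List.mem_cons_of_mem _ hY, hx⟩

lemma sevw_head {C : List (Set M)} {P : Set M}
    (h : ∃ X ∈ C, (X ∩ P).Nonempty) :
    ∃ a r, sevw C P = a :: r ∧ (a ∩ P).Nonempty := by
  induction C with
  | nil => simp at h
  | cons X rest ih =>
    by_cases hX : (X ∩ P).Nonempty
    · exact ⟨X, rest, by simp [sevw, hX], hX⟩
    · obtain ⟨Y, hY, hYP⟩ := h
      rcases List.mem_cons.1 hY with rfl | hY
      · exact absurd hYP hX
      · obtain ⟨a, r, ha, haP⟩ := ih ⟨Y, hY, hYP⟩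
        refine ⟨X ∪ a, r, by simp [sevw, hX, ha], ?_⟩
        exact haP.mono (by rw [union_inter_distrib_right]; exact subset_union_right)

lemma sevr_eq_natr_sevw {C : List (Set M)} {P : Set M}
    (h : ∃ X ∈ C, (X ∩ P).Nonempty) :
    sevr C P = natr (sevw C P) P := by
  induction C with
  | nil => simp at h
  | cons X rest ih =>
    by_cases hX : (X ∩ P).Nonempty
    · simp [sevr, sevw, natr, hX]
    · obtain ⟨Y, hY, hYP⟩ := h
      rcases List.mem_cons.1 hY with rfl | hY
      · exact absurd hYP hX
      · have hrest : ∃ X ∈ rest, (X ∩ P).Nonempty := ⟨Y, hY, hYP⟩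
        obtain ⟨a, r, ha, haP⟩ := sevw_head hrest
        have hXP : X ∩ P = ∅ := not_nonempty_iff_eq_empty.1 hX
        have hXa : (X ∪ a) ∩ P = a ∩ P := by
          rw [union_inter_distrib_right, hXP, empty_union]
        have hXaP : ((X ∪ a) ∩ P).Nonempty := hXa ▸ haP
        have key : sevr rest P = (a ∩ P) :: (a \ P) :: r := by
          rw [ih hrest, ha, natr, if_pos haP]
        have hXd : (X ∪ a) \ P = X ∪ a \ P := by
          rw [union_diff_distrib]
          congr 1
          rw [sdiff_eq_self_iff_disjoint, disjoint_comm, disjoint_iff_inter_eq_empty]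
          exact hXP
        simp only [sevr, sevw, if_neg hX, ha, key, natr, hXa, hXd, if_pos haP]

/-- Severe revision decomposes into severe antiwithdrawal followed by natural
revision. -/
theorem sevr_eq_sevw_natr (C : List (Set M)) (hC : IsPartition C) (P : Set M)
    (hP : P.Nonempty) :
    equivC (sevr C P) (natr (sevw C P) P) := by
  obtain ⟨x, hx⟩ := hP
  have hxU : x ∈ C.foldr (· ∪ ·) ∅ := hC.2 ▸ mem_univ x
  obtain ⟨X, hXC, hxX⟩ := mem_foldr_union hxU
  rw [sevr_eq_natr_sevw ⟨X, hXC, ⟨x, hxX, hx⟩⟩]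
  intro Q; rfl

end BeliefRevision
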